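/- Let f_3 : F_p^n → [-1,1] and let A : F_p^m → F_p^n be a uniformly random injective affine map, m ≤ n. Then |E_A[‖Af_3‖_{U^d}^{2^d}] − ‖f_3‖_{U^d}^{2^d}| ≤ p^{d+1−m}, where Af_3 = f_3 ∘ A. -/

import Mathlib

open Finset

/-- An affine embedding `F_p^m → F_p^n`. -/
def IsAffineEmbedding {p m n : ℕ} (A : (Fin m → ZMod p) → (Fin n → ZMod p)) : Prop :=
  Function.Injective A ∧
    ∃ (L : (Fin m → ZMod p) →ₗ[ZMod p] (Fin n → ZMod p)) (c : Fin n → ZMod p),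
      ∀ x, A x = L x + c

noncomputable instance {p m n : ℕ} [Fact p.Prime] :
    Fintype {A : (Fin m → ZMod p) → (Fin n → ZMod p) // IsAffineEmbedding A} :=
  Fintype.ofFinite _

/-- Gowers average of order `d`: `‖h‖_{U^d}^{2^d} = E_{x,y_1,…,y_d} ∏_{I⊆[d]} h(x+Σ_{i∈I}y_i)`. -/
noncomputable def gowersAvg {V : Type*} [AddCommGroup V] [Fintype V]
    (h : V → ℝ) (d : ℕ) : ℝ :=
  (∑ x : V, ∑ y : Fin d → V, ∏ I : Finset (Fin d), h (x + ∑ i ∈ I, y i)) /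
    ((Fintype.card V : ℝ) ^ (d + 1))

section CountAux
open Submodule Set
variable {K : Type*} [Field K] [Fintype K] {V : Type*} [AddCommGroup V] [Module K V]
  [Fintype V]

omit [Fintype V] in
private lemma card_span_range_le {k : ℕ} (v : Fin k → V) [Finite V] :
    Nat.card (span K (Set.range v)) ≤ Fintype.card K ^ k := by
  classical
  have hsurj : Function.Surjective
      (fun c : Fin k → K => (⟨∑ i, c i • v i,
        Submodule.sum_smul_mem _ _ fun i _ => Submodule.subset_span ⟨i, rfl⟩⟩ :
          span K (Set.range v))) := by
    rintro ⟨x, hx⟩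
    obtain ⟨c, hc⟩ := (mem_span_range_iff_exists_fun K).1 hx
    exact ⟨c, Subtype.ext hc⟩
  calc Nat.card (span K (Set.range v)) ≤ Nat.card (Fin k → K) :=
        Nat.card_le_card_of_surjective _ hsurj
    _ = Fintype.card K ^ k := by simp [Nat.card_eq_fintype_card]

omit [Fintype K] [Fintype V] in
private lemma li_of_not_mem_span : ∀ {d : ℕ} (v : Fin d → V),
    (∀ j, v j ∉ span K (v '' Set.Iio j)) → LinearIndependent K v := by
  intro d
  induction d with
  | zero => intro v _; exact linearIndependent_empty_type
  | succ d ih =>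
    intro v hv
    rw [← Fin.snoc_init_self v]
    refine linearIndependent_fin_snoc.2 ⟨ih (Fin.init v) fun j => ?_, ?_⟩
    · have himg : Fin.init v '' Set.Iio j = v '' Set.Iio j.castSucc := by
        ext w
        constructor
        · rintro ⟨i, hi, rfl⟩
          exact ⟨i.castSucc, by simpa using hi, rfl⟩
        · rintro ⟨i, hi, rfl⟩
          have hne : i ≠ Fin.last d := by
            intro h; subst h
            exact absurd (Fin.castSucc_lt_last j) (not_lt.2 hi.le)
          obtain ⟨i', rfl⟩ := Fin.exists_castSucc_eq.2 hne
          exact ⟨i', by simpa using hi, rfl⟩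
      rw [show Fin.init v j = v j.castSucc from rfl, himg]
      exact hv j.castSucc
    · have himg : Set.range (Fin.init v) = v '' Set.Iio (Fin.last d) := by
        ext w
        constructor
        · rintro ⟨i, rfl⟩
          exact ⟨i.castSucc, Fin.castSucc_lt_last i, rfl⟩
        · rintro ⟨i, hi, rfl⟩
          obtain ⟨i', rfl⟩ := Fin.exists_castSucc_eq.2 (Fin.ne_last_of_lt hi)
          exact ⟨i', rfl⟩
      rw [himg]
      exact hv (Fin.last d)

private lemma dep_count {d : ℕ}
    [DecidablePred fun y : Fin d → V => ¬ LinearIndependent K y] :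
    (univ.filter fun y : Fin d → V => ¬ LinearIndependent K y).card * Fintype.card V ≤
      (∑ j ∈ Finset.range d, Fintype.card K ^ j) * Fintype.card V ^ d := by
  classical
  have hsub : (univ.filter fun y : Fin d → V => ¬ LinearIndependent K y) ⊆
      univ.biUnion (fun j : Fin d =>
        univ.filter fun y : Fin d → V => y j ∈ span K (y '' Set.Iio j)) := by
    intro y hy
    simp only [Finset.mem_filter, Finset.mem_univ, true_and] at hy
    have hex : ∃ j, y j ∈ span K (y '' Set.Iio j) := by
      by_contra h
      push_neg at h
      exact hy (li_of_not_mem_span y h)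
    obtain ⟨j, hj⟩ := hex
    exact mem_biUnion.2 ⟨j, mem_univ _, by simp [mem_filter, hj]⟩
  have h2 : ∀ j : Fin d,
      (univ.filter fun y : Fin d → V => y j ∈ span K (y '' Set.Iio j)).card *
          Fintype.card V ≤ Fintype.card K ^ (j : ℕ) * Fintype.card V ^ d := by
    intro j
    set s : Finset (Fin d → V) :=
      univ.filter fun y : Fin d → V => y j ∈ span K (y '' Set.Iio j) with hs
    set t : Finset (Fin d → V) := univ.filter (fun z => z j = 0) with ht
    have hmaps : ∀ y ∈ s, Function.update y j 0 ∈ t := by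
      intro y _; simp [ht]
    have hcard := Finset.card_eq_sum_card_fiberwise hmaps
    have hfib : ∀ z ∈ t, (s.filter (fun y => Function.update y j 0 = z)).card ≤
        Fintype.card K ^ (j : ℕ) := by
      intro z hz
      have hfin : (span K (z '' Set.Iio j) : Set V).Finite := Set.toFinite _
      have hle : (s.filter (fun y => Function.update y j 0 = z)).card ≤ hfin.toFinset.card := by
        apply Finset.card_le_card_of_injOn (fun y => y j)
        · intro y hy
          simp only [hs, Finset.mem_coe, Finset.mem_filter, Finset.mem_univ, true_and] at hy
          obtain ⟨h1, h2⟩ := hy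
          have himg : y '' Set.Iio j = z '' Set.Iio j := by
            subst h2
            exact Set.image_congr fun i hi =>
              (Function.update_of_ne (ne_of_lt hi) _ _).symm
          rw [Finset.mem_coe, Set.Finite.mem_toFinset]
          rw [himg] at h1
          exact h1
        · intro y hy y' hy' hj'
          simp only [Finset.mem_coe, Finset.mem_filter] at hy hy'
          have h2 := hy.2; have h2' := hy'.2
          funext i
          by_cases hij : i = j
          · subst hij; exact hj'
          · have := congrFun (h2.trans h2'.symm) i
            simpa [Function.update_of_ne hij] using this
      refine hle.trans ?_
      have hcardeq : hfin.toFinset.card = Nat.card (span K (z '' Set.Iio j)) := by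
        show _ = Nat.card ((span K (z '' Set.Iio j) : Set V))
        rw [Nat.card_coe_set_eq, Set.ncard_eq_toFinset_card _ hfin]
      rw [hcardeq]
      have himg : z '' Set.Iio j = Set.range (fun i : Fin (j : ℕ) =>
          z ⟨i.1, i.2.trans j.2⟩) := by
        ext x
        constructor
        · rintro ⟨i, hi, rfl⟩
          exact ⟨⟨i.1, hi⟩, by simp⟩
        · rintro ⟨i, rfl⟩
          exact ⟨⟨i.1, i.2.trans j.2⟩, by simp [Fin.lt_def, i.2], rfl⟩
      rw [himg]
      exact card_span_range_le _
    have hsum : s.card ≤ t.card * Fintype.card K ^ (j : ℕ) := by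
      rw [hcard]
      calc ∑ z ∈ t, (s.filter (fun y => Function.update y j 0 = z)).card ≤
          ∑ z ∈ t, Fintype.card K ^ (j : ℕ) := Finset.sum_le_sum hfib
        _ = t.card * Fintype.card K ^ (j : ℕ) := by rw [Finset.sum_const, smul_eq_mul]
    have htcard : t.card * Fintype.card V = Fintype.card V ^ d := by
      have e : {z : Fin d → V // z j = 0} × V ≃ (Fin d → V) :=
        { toFun := fun zv => Function.update zv.1.1 j zv.2
          invFun := fun y => (⟨Function.update y j 0, Function.update_self _ _ _⟩, y j)
          left_inv := by
            rintro ⟨⟨z, hz⟩, v⟩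
            dsimp only
            refine Prod.ext (Subtype.ext ?_) (Function.update_self _ _ _)
            dsimp only
            rw [Function.update_idem, ← hz, Function.update_eq_self]
          right_inv := by
            intro y
            simp only [Function.update_idem, Function.update_self, Function.update_eq_self] }
      have := Fintype.card_congr e
      rw [Fintype.card_prod, Fintype.card_subtype] at this
      rw [show t = univ.filter (fun z : Fin d → V => z j = 0) from ht] at *
      rw [this]
      simp [Fintype.card_fun]
    calc s.card * Fintype.card V ≤ (t.card * Fintype.card K ^ (j : ℕ)) * Fintype.card V :=
        Nat.mul_le_mul_right _ hsum
      _ = Fintype.card K ^ (j : ℕ) * (t.card * Fintype.card V) := by ring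
      _ = Fintype.card K ^ (j : ℕ) * Fintype.card V ^ d := by rw [htcard]
  calc (univ.filter fun y : Fin d → V => ¬ LinearIndependent K y).card * Fintype.card V ≤
      (∑ j : Fin d, (univ.filter fun y : Fin d → V =>
        y j ∈ span K (y '' Set.Iio j)).card) * Fintype.card V := by
        exact Nat.mul_le_mul_right _ ((Finset.card_le_card hsub).trans Finset.card_biUnion_le)
    _ = ∑ j : Fin d, (univ.filter fun y : Fin d → V =>
        y j ∈ span K (y '' Set.Iio j)).card * Fintype.card V := by rw [Finset.sum_mul]
    _ ≤ ∑ j : Fin d, Fintype.card K ^ (j : ℕ) * Fintype.card V ^ d :=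
        Finset.sum_le_sum fun j _ => h2 j
    _ = (∑ j ∈ Finset.range d, Fintype.card K ^ j) * Fintype.card V ^ d := by
        rw [← Finset.sum_mul, Fin.sum_univ_eq_sum_range]
end CountAux

section BasisAux
open Submodule Set
variable {K : Type*} [Field K] {V : Type*} [AddCommGroup V] [Module K V]
  [FiniteDimensional K V]

private lemma exists_basis_fin {d : ℕ} {v : Fin d → V} (hv : LinearIndependent K v) :
    ∃ (k : ℕ) (b : Module.Basis (Fin d ⊕ Fin k) K V), (∀ i, b (Sum.inl i) = v i) ∧
      d + k = Module.finrank K V := by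
  classical
  have hsub : LinearIndepOn K id (Set.range v) := (linearIndepOn_id_range_iff hv.injective).mpr hv
  set t : Set V := hsub.extend (Set.subset_univ _) with ht
  have hst : Set.range v ⊆ t := hsub.subset_extend _
  have hfin : t.Finite := Set.toFinite _
  haveI : Fintype t := hfin.fintype
  haveI : Fintype ↥(t \ Set.range v) := (hfin.subset (Set.diff_subset)).fintype
  set b0 : Module.Basis t K V := Module.Basis.extend hsub with hb0
  let e1 : Fin d ≃ Set.range v := Equiv.ofInjective v hv.injective
  let e2 : (Set.range v : Set V) ⊕ ↥(t \ Set.range v) ≃ t :=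
    Equiv.Set.sumDiffSubset hst
  let e3 : Fin d ⊕ ↥(t \ Set.range v) ≃ t := (Equiv.sumCongr e1 (Equiv.refl _)).trans e2
  obtain ⟨k, ⟨e4⟩⟩ : ∃ k : ℕ, Nonempty (↥(t \ Set.range v) ≃ Fin k) :=
    ⟨_, ⟨Fintype.equivFin _⟩⟩
  let e5 : Fin d ⊕ Fin k ≃ t := (Equiv.sumCongr (Equiv.refl _) e4.symm).trans e3
  refine ⟨k, b0.reindex e5.symm, fun i => ?_, ?_⟩
  · rw [Module.Basis.reindex_apply, Equiv.symm_symm]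
    show b0 (e3 (Sum.inl i)) = v i
    show b0 (e2 (Sum.inl (e1 i))) = v i
    rw [show e2 (Sum.inl (e1 i)) = Set.inclusion hst (e1 i) from
      Equiv.Set.sumDiffSubset_apply_inl hst (e1 i)]
    have : (Set.inclusion hst (e1 i) : V) = v i := rfl
    rw [hb0]
    rw [show Set.inclusion hst (e1 i) = (⟨v i, hst ⟨i, rfl⟩⟩ : t) from Subtype.ext this]
    exact Module.Basis.extend_apply_self _ _
  · have := Module.finrank_eq_card_basis (b0.reindex e5.symm)
    rw [this, Fintype.card_sum, Fintype.card_fin, Fintype.card_fin]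

private lemma exists_linEquiv {d : ℕ} {Y Y' : Fin d → V} (hY : LinearIndependent K Y)
    (hY' : LinearIndependent K Y') : ∃ M : V ≃ₗ[K] V, ∀ i, M (Y i) = Y' i := by
  obtain ⟨k, b, hb, hk⟩ := exists_basis_fin hY
  obtain ⟨k', b', hb', hk'⟩ := exists_basis_fin hY'
  have hkk : k = k' := by omega
  subst hkk
  refine ⟨b.equiv b' (Equiv.refl _), fun i => ?_⟩
  rw [← hb i, Module.Basis.equiv_apply, Equiv.refl_apply, hb']
end BasisAux

section Affine
variable {p m n d : ℕ} [Fact p.Prime]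

private lemma exists_affineEmbedding (hmn : m ≤ n) :
    ∃ A : (Fin m → ZMod p) → (Fin n → ZMod p), IsAffineEmbedding A := by
  classical
  refine ⟨fun x j => if h : (j : ℕ) < m then x ⟨j, h⟩ else 0,
    ?_, ⟨{ toFun := fun x j => if h : (j : ℕ) < m then x ⟨j, h⟩ else 0,
           map_add' := ?_, map_smul' := ?_ }, 0, ?_⟩⟩
  · intro x x' hxx
    funext i
    have h2 := congrFun hxx ⟨i.1, lt_of_lt_of_le i.2 hmn⟩
    simpa [i.2] using h2
  · intro x x'; funext j; by_cases h : (j : ℕ) < m <;> simp [h]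
  · intro r x; funext j; by_cases h : (j : ℕ) < m <;> simp [h]
  · intro x; funext j; simp

private lemma IsAffineEmbedding.comp_equiv {A : (Fin m → ZMod p) → (Fin n → ZMod p)}
    (hA : IsAffineEmbedding A) (M : (Fin n → ZMod p) ≃ₗ[ZMod p] (Fin n → ZMod p))
    (t : Fin n → ZMod p) : IsAffineEmbedding (fun v => M (A v) + t) := by
  obtain ⟨hinj, L, c, hL⟩ := hA
  refine ⟨?_, (M : (Fin n → ZMod p) →ₗ[ZMod p] (Fin n → ZMod p)).comp L, M c + t, ?_⟩
  · intro a b hab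
    exact hinj (M.injective (by simpa using hab))
  · intro x
    simp [hL x, map_add, add_assoc]

private lemma indep_image {A : (Fin m → ZMod p) → (Fin n → ZMod p)}
    (hA : IsAffineEmbedding A) (x : Fin m → ZMod p) {y : Fin d → Fin m → ZMod p}
    (hy : LinearIndependent (ZMod p) y) :
    LinearIndependent (ZMod p) (fun i => A (x + y i) - A x) := by
  obtain ⟨hinj, L, c, hL⟩ := hA
  have heq : (fun i => A (x + y i) - A x) = fun i => L (y i) := by
    funext i
    rw [hL, hL, map_add]
    abel
  rw [heq]
  have hLinj : Function.Injective L := by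
    intro a b hab
    apply hinj
    rw [hL a, hL b, hab]
  exact hy.map' L (LinearMap.ker_eq_bot.2 hLinj)

private lemma key_sum [DecidablePred fun s : (Fin n → ZMod p) × (Fin d → Fin n → ZMod p) =>
      LinearIndependent (ZMod p) s.2]
    (x : Fin m → ZMod p) (y : Fin d → Fin m → ZMod p)
    (hy : LinearIndependent (ZMod p) y)
    (F : (Fin n → ZMod p) × (Fin d → Fin n → ZMod p) → ℝ) :
    (((univ.filter fun s : (Fin n → ZMod p) × (Fin d → Fin n → ZMod p) =>
        LinearIndependent (ZMod p) s.2)).card : ℝ) *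
      ∑ A : {A : (Fin m → ZMod p) → (Fin n → ZMod p) // IsAffineEmbedding A},
        F (A.1 x, fun i => A.1 (x + y i) - A.1 x) =
    (Fintype.card {A : (Fin m → ZMod p) → (Fin n → ZMod p) // IsAffineEmbedding A} : ℝ) *
      ∑ s ∈ (univ.filter fun s : (Fin n → ZMod p) × (Fin d → Fin n → ZMod p) =>
        LinearIndependent (ZMod p) s.2), F s := by
  classical
  set S : Finset ((Fin n → ZMod p) × (Fin d → Fin n → ZMod p)) :=
    univ.filter (fun s => LinearIndependent (ZMod p) s.2) with hS
  set Φ : {A : (Fin m → ZMod p) → (Fin n → ZMod p) // IsAffineEmbedding A} →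
      (Fin n → ZMod p) × (Fin d → Fin n → ZMod p) :=
    fun A => (A.1 x, fun i => A.1 (x + y i) - A.1 x) with hΦ
  have hmaps : ∀ A : {A : (Fin m → ZMod p) → (Fin n → ZMod p) // IsAffineEmbedding A},
      A ∈ (univ : Finset _) → Φ A ∈ S := by
    intro A _
    simp only [hS, Finset.mem_filter, Finset.mem_univ, true_and, hΦ]
    exact indep_image A.2 x hy
  have hfibeq : ∀ s ∈ S, ∀ s' ∈ S,
      ((univ.filter fun A => Φ A = s)).card = ((univ.filter fun A => Φ A = s')).card := by
    intro s hsS s' hs'S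
    rw [hS, Finset.mem_filter] at hsS hs'S
    obtain ⟨M, hM⟩ := exists_linEquiv hsS.2 hs'S.2
    set t : Fin n → ZMod p := s'.1 - M s.1 with hts
    refine Finset.card_bij'
      (fun A _ => (⟨fun v => M (A.1 v) + t, A.2.comp_equiv M t⟩ :
        {A // IsAffineEmbedding A}))
      (fun B _ => (⟨fun v => M.symm (B.1 v) + (-(M.symm t)), B.2.comp_equiv M.symm _⟩ :
        {A // IsAffineEmbedding A})) ?_ ?_ ?_ ?_
    · intro A hA
      rw [Finset.mem_filter] at hA ⊢
      refine ⟨Finset.mem_univ _, ?_⟩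
      have h1 : A.1 x = s.1 := congrArg Prod.fst hA.2
      refine Prod.ext ?_ ?_
      · show M (A.1 x) + t = s'.1
        rw [h1, hts]; abel
      · funext i
        show M (A.1 (x + y i)) + t - (M (A.1 x) + t) = s'.2 i
        have h2 : A.1 (x + y i) - A.1 x = s.2 i := congrFun (congrArg Prod.snd hA.2) i
        rw [← hM i, ← h2, map_sub]
        abel
    · intro B hB
      rw [Finset.mem_filter] at hB ⊢
      refine ⟨Finset.mem_univ _, ?_⟩
      have h1 : B.1 x = s'.1 := congrArg Prod.fst hB.2
      refine Prod.ext ?_ ?_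
      · show M.symm (B.1 x) + (-(M.symm t)) = s.1
        rw [h1, hts]
        simp only [map_sub, LinearEquiv.symm_apply_apply]
        abel
      · funext i
        show M.symm (B.1 (x + y i)) + (-(M.symm t)) -
          (M.symm (B.1 x) + (-(M.symm t))) = s.2 i
        have h2 : B.1 (x + y i) - B.1 x = s'.2 i := congrFun (congrArg Prod.snd hB.2) i
        have : M.symm (B.1 (x + y i)) - M.symm (B.1 x) = M.symm (s'.2 i) := by
          rw [← map_sub, h2]
        rw [← hM i] at this
        simp only [LinearEquiv.symm_apply_apply] at this
        rw [← this]
        abel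
    · intro A _
      apply Subtype.ext
      funext v
      simp
    · intro B _
      apply Subtype.ext
      funext v
      simp
  have h1 : ∑ A : {A : (Fin m → ZMod p) → (Fin n → ZMod p) // IsAffineEmbedding A},
      F (Φ A) = ∑ s ∈ S, (((univ.filter fun A => Φ A = s)).card : ℝ) * F s := by
    rw [← Finset.sum_fiberwise_of_maps_to hmaps (fun A => F (Φ A))]
    refine Finset.sum_congr rfl fun s hs => ?_
    rw [Finset.sum_congr rfl (fun A hA => by rw [(Finset.mem_filter.1 hA).2] :
      ∀ A ∈ univ.filter fun A => Φ A = s, F (Φ A) = F s), Finset.sum_const, nsmul_eq_mul]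
  have h2 : (Fintype.card
      {A : (Fin m → ZMod p) → (Fin n → ZMod p) // IsAffineEmbedding A} : ℝ) =
      ∑ s ∈ S, (((univ.filter fun A => Φ A = s)).card : ℝ) := by
    norm_cast
    rw [← Finset.card_univ]
    exact Finset.card_eq_sum_card_fiberwise hmaps
  calc (S.card : ℝ) * ∑ A : {A : (Fin m → ZMod p) → (Fin n → ZMod p) //
      IsAffineEmbedding A}, F (Φ A)
      = ∑ s' ∈ S, ∑ s ∈ S, (((univ.filter fun A => Φ A = s)).card : ℝ) * F s := by
        rw [h1, Finset.sum_const, nsmul_eq_mul]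
    _ = ∑ s' ∈ S, ∑ s ∈ S, (((univ.filter fun A => Φ A = s')).card : ℝ) * F s := by
        refine Finset.sum_congr rfl fun s' hs' => Finset.sum_congr rfl fun s hs => ?_
        rw [hfibeq s hs s' hs']
    _ = ∑ s' ∈ S, (((univ.filter fun A => Φ A = s')).card : ℝ) * ∑ s ∈ S, F s := by
        refine Finset.sum_congr rfl fun s' hs' => ?_
        rw [Finset.mul_sum]
    _ = (Fintype.card {A : (Fin m → ZMod p) → (Fin n → ZMod p) //
        IsAffineEmbedding A} : ℝ) * ∑ s ∈ S, F s := by rw [h2, Finset.sum_mul]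
end Affine

private lemma two_geom_le {P : ℕ} (hp : 2 ≤ P) (d : ℕ) :
    2 * ∑ j ∈ Finset.range d, P ^ j ≤ P ^ (d + 1) := by
  induction d with
  | zero => simpa using le_trans hp (Nat.le_refl P).le
  | succ d ih =>
    rw [Finset.sum_range_succ, Nat.mul_add]
    calc 2 * (∑ j ∈ Finset.range d, P ^ j) + 2 * P ^ d ≤ P ^ (d + 1) + 2 * P ^ d :=
          Nat.add_le_add_right ih _
      _ ≤ P ^ (d + 1) + P * P ^ d := Nat.add_le_add_left (Nat.mul_le_mul_right _ hp) _
      _ = 2 * P ^ (d + 1) := by rw [← pow_succ']; ring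
      _ ≤ P * P ^ (d + 1) := Nat.mul_le_mul_right _ hp
      _ = P ^ (d + 1 + 1) := by rw [← pow_succ']

set_option maxHeartbeats 1600000 in
theorem gowersAvg_random_restriction {p m n d : ℕ} [Fact p.Prime] (hmn : m ≤ n)
    (f₃ : (Fin n → ZMod p) → ℝ) (hf₃ : ∀ x, f₃ x ∈ Set.Icc (-1 : ℝ) 1) :
    |(∑ A : {A : (Fin m → ZMod p) → (Fin n → ZMod p) // IsAffineEmbedding A},
          gowersAvg (fun x => f₃ (A.1 x)) d) /
        (Fintype.card {A : (Fin m → ZMod p) → (Fin n → ZMod p) // IsAffineEmbedding A} : ℝ) -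
      gowersAvg f₃ d| ≤ (p : ℝ) ^ (d + 1) / (p : ℝ) ^ m := by
  classical
  have hp : p.Prime := Fact.out
  haveI : NeZero p := ⟨hp.ne_zero⟩
  have hp2 : 2 ≤ p := hp.two_le
  have hppos : (0 : ℝ) < (p : ℝ) := by exact_mod_cast hp.pos
  obtain ⟨A₀, hA₀⟩ := exists_affineEmbedding (p := p) hmn
  haveI : Nonempty {A : (Fin m → ZMod p) → (Fin n → ZMod p) // IsAffineEmbedding A} :=
    ⟨⟨A₀, hA₀⟩⟩
  set N : ℕ := Fintype.card {A : (Fin m → ZMod p) → (Fin n → ZMod p) //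
    IsAffineEmbedding A} with hN
  have hN0 : (0 : ℝ) < (N : ℝ) := by exact_mod_cast Fintype.card_pos
  have hcV : (Fintype.card (Fin m → ZMod p)) = p ^ m := by simp [ZMod.card]
  have hcW : (Fintype.card (Fin n → ZMod p)) = p ^ n := by simp [ZMod.card]
  set cV : ℝ := (Fintype.card (Fin m → ZMod p) : ℝ) with hcVdef
  set cW : ℝ := (Fintype.card (Fin n → ZMod p) : ℝ) with hcWdef
  have hcVval : cV = (p : ℝ) ^ m := by rw [hcVdef, hcV]; push_cast; ring
  have hcWval : cW = (p : ℝ) ^ n := by rw [hcWdef, hcW]; push_cast; ring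
  have hcVpos : (0 : ℝ) < cV ^ (d + 1) := by rw [hcVval]; positivity
  have hcWpos : (0 : ℝ) < cW ^ (d + 1) := by rw [hcWval]; positivity
  set F : (Fin n → ZMod p) × (Fin d → Fin n → ZMod p) → ℝ :=
    fun s => ∏ I : Finset (Fin d), f₃ (s.1 + ∑ i ∈ I, s.2 i) with hF
  have hF1 : ∀ s, |F s| ≤ 1 := by
    intro s
    rw [hF, Finset.abs_prod]
    exact Finset.prod_le_one (fun I _ => abs_nonneg _)
      (fun I _ => abs_le.2 ⟨(hf₃ _).1, (hf₃ _).2⟩)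
  set S : Finset ((Fin n → ZMod p) × (Fin d → Fin n → ZMod p)) :=
    univ.filter (fun s => LinearIndependent (ZMod p) s.2) with hS
  set BW : Finset ((Fin n → ZMod p) × (Fin d → Fin n → ZMod p)) :=
    univ.filter (fun s => ¬ LinearIndependent (ZMod p) s.2) with hBW
  set GV : Finset ((Fin m → ZMod p) × (Fin d → Fin m → ZMod p)) :=
    univ.filter (fun v => LinearIndependent (ZMod p) v.2) with hGV
  set BV : Finset ((Fin m → ZMod p) × (Fin d → Fin m → ZMod p)) :=
    univ.filter (fun v => ¬ LinearIndependent (ZMod p) v.2) with hBV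
  set E : ℝ := (∑ s ∈ S, F s) / (S.card : ℝ) with hE
  have hsum_le : ∀ (T : Finset ((Fin n → ZMod p) × (Fin d → Fin n → ZMod p))),
      |∑ s ∈ T, F s| ≤ (T.card : ℝ) := by
    intro T
    refine (Finset.abs_sum_le_sum_abs _ _).trans ?_
    calc ∑ s ∈ T, |F s| ≤ ∑ s ∈ T, 1 := Finset.sum_le_sum fun s _ => hF1 s
      _ = (T.card : ℝ) := by simp
  have hEabs : |E| ≤ 1 := by
    rw [hE, abs_div, abs_of_nonneg (by positivity : (0:ℝ) ≤ (S.card : ℝ))]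
    rcases Nat.eq_zero_or_pos S.card with h | h
    · simp [h]
    · rw [div_le_one (by exact_mod_cast h)]
      exact hsum_le S
  set g : {A : (Fin m → ZMod p) → (Fin n → ZMod p) // IsAffineEmbedding A} →
      (Fin m → ZMod p) × (Fin d → Fin m → ZMod p) → ℝ :=
    fun A v => F (A.1 v.1, fun i => A.1 (v.1 + v.2 i) - A.1 v.1) with hg
  have hgabs : ∀ A v, |g A v| ≤ 1 := fun A v => hF1 _
  have hterm : ∀ (A : {A : (Fin m → ZMod p) → (Fin n → ZMod p) // IsAffineEmbedding A})
      (x : Fin m → ZMod p) (y : Fin d → Fin m → ZMod p),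
      (∏ I : Finset (Fin d), f₃ (A.1 (x + ∑ i ∈ I, y i))) = g A (x, y) := by
    intro A x y
    obtain ⟨hinj, L, c, hL⟩ := A.2
    rw [hg, hF]
    refine Finset.prod_congr rfl fun I _ => ?_
    congr 1
    show A.1 (x + ∑ i ∈ I, y i) = A.1 x + ∑ i ∈ I, (A.1 (x + y i) - A.1 x)
    have hsummand : ∀ i ∈ I, A.1 (x + y i) - A.1 x = L (y i) := by
      intro i _
      rw [hL, hL, map_add]
      abel
    rw [Finset.sum_congr rfl hsummand, hL, hL, map_add, map_sum]
    abel
  have hgow : ∀ A : {A : (Fin m → ZMod p) → (Fin n → ZMod p) // IsAffineEmbedding A},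
      gowersAvg (fun z => f₃ (A.1 z)) d =
      (∑ v : (Fin m → ZMod p) × (Fin d → Fin m → ZMod p), g A v) / cV ^ (d + 1) := by
    intro A
    rw [gowersAvg]
    congr 1
    rw [Fintype.sum_prod_type]
    exact Finset.sum_congr rfl fun x _ => Finset.sum_congr rfl fun y _ => hterm A x y
  have hEA : ∀ v ∈ GV, (∑ A : {A : (Fin m → ZMod p) → (Fin n → ZMod p) //
      IsAffineEmbedding A}, g A v) = (N : ℝ) * E := by
    intro v hv
    rw [hGV, Finset.mem_filter] at hv
    have key := key_sum (n := n) v.1 v.2 hv.2 F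
    have hSne : S.Nonempty := ⟨(A₀ v.1, fun i => A₀ (v.1 + v.2 i) - A₀ v.1), by
      rw [hS, Finset.mem_filter]
      exact ⟨Finset.mem_univ _, indep_image hA₀ v.1 hv.2⟩⟩
    have hSc0 : (S.card : ℝ) ≠ 0 := by
      exact_mod_cast (Finset.card_pos.2 hSne).ne'
    simp only [hg]
    rw [← hS] at key
    calc (∑ A : {A : (Fin m → ZMod p) → (Fin n → ZMod p) // IsAffineEmbedding A},
        F (A.1 v.1, fun i => A.1 (v.1 + v.2 i) - A.1 v.1))
        = ((S.card : ℝ) * ∑ A : {A : (Fin m → ZMod p) → (Fin n → ZMod p) //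
          IsAffineEmbedding A}, F (A.1 v.1, fun i => A.1 (v.1 + v.2 i) - A.1 v.1)) /
            (S.card : ℝ) := by rw [mul_div_cancel_left₀ _ hSc0]
      _ = ((N : ℝ) * ∑ s ∈ S, F s) / (S.card : ℝ) := by rw [key, hN]
      _ = (N : ℝ) * E := by rw [hE, mul_div_assoc]
  have hsumA : (∑ A : {A : (Fin m → ZMod p) → (Fin n → ZMod p) // IsAffineEmbedding A},
      gowersAvg (fun z => f₃ (A.1 z)) d) =
      ((GV.card : ℝ) * ((N : ℝ) * E) + ∑ v ∈ BV, ∑ A : {A : (Fin m → ZMod p) →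
        (Fin n → ZMod p) // IsAffineEmbedding A}, g A v) / cV ^ (d + 1) := by
    calc (∑ A : {A : (Fin m → ZMod p) → (Fin n → ZMod p) // IsAffineEmbedding A},
        gowersAvg (fun z => f₃ (A.1 z)) d)
        = ∑ A : {A : (Fin m → ZMod p) → (Fin n → ZMod p) // IsAffineEmbedding A},
          (∑ v : (Fin m → ZMod p) × (Fin d → Fin m → ZMod p), g A v) / cV ^ (d + 1) :=
            Finset.sum_congr rfl fun A _ => hgow A
      _ = (∑ A : {A : (Fin m → ZMod p) → (Fin n → ZMod p) // IsAffineEmbedding A},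
          ∑ v : (Fin m → ZMod p) × (Fin d → Fin m → ZMod p), g A v) / cV ^ (d + 1) := by
            rw [← Finset.sum_div]
      _ = (∑ v : (Fin m → ZMod p) × (Fin d → Fin m → ZMod p),
          ∑ A : {A : (Fin m → ZMod p) → (Fin n → ZMod p) // IsAffineEmbedding A},
            g A v) / cV ^ (d + 1) := by rw [Finset.sum_comm]
      _ = ((∑ v ∈ GV, ∑ A : {A : (Fin m → ZMod p) → (Fin n → ZMod p) //
            IsAffineEmbedding A}, g A v) +
          ∑ v ∈ BV, ∑ A : {A : (Fin m → ZMod p) → (Fin n → ZMod p) //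
            IsAffineEmbedding A}, g A v) / cV ^ (d + 1) := by
            rw [← Finset.sum_filter_add_sum_filter_not univ
              (fun v => LinearIndependent (ZMod p) v.2), ← hGV, ← hBV]
      _ = ((GV.card : ℝ) * ((N : ℝ) * E) + ∑ v ∈ BV, ∑ A : {A : (Fin m → ZMod p) →
            (Fin n → ZMod p) // IsAffineEmbedding A}, g A v) / cV ^ (d + 1) := by
            rw [Finset.sum_congr rfl hEA, Finset.sum_const, nsmul_eq_mul]
  have hgowf : gowersAvg f₃ d = ((S.card : ℝ) * E + ∑ s ∈ BW, F s) / cW ^ (d + 1) := by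
    rw [gowersAvg]
    congr 1
    show (∑ x, ∑ y : Fin d → (Fin n → ZMod p), F (x, y)) = _
    rw [← Fintype.sum_prod_type]
    rw [← Finset.sum_filter_add_sum_filter_not univ
      (fun s => LinearIndependent (ZMod p) s.2) F, ← hS, ← hBW]
    congr 1
    rcases Nat.eq_zero_or_pos S.card with h | h
    · rw [Finset.card_eq_zero.1 h]
      simp
    · rw [hE, mul_div_cancel₀ _ (by exact_mod_cast h.ne' : (S.card : ℝ) ≠ 0)]
  -- cardinality identities
  have hGVc : (GV.card : ℝ) = cV ^ (d + 1) - (BV.card : ℝ) := by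
    have h := Finset.card_filter_add_card_filter_not
      (s := (univ : Finset ((Fin m → ZMod p) × (Fin d → Fin m → ZMod p))))
      (p := fun v => LinearIndependent (ZMod p) v.2)
    rw [← hGV, ← hBV, Finset.card_univ, Fintype.card_prod] at h
    have hcd : Fintype.card (Fin d → Fin m → ZMod p) = (Fintype.card (Fin m → ZMod p)) ^ d := by
      simp
    rw [hcd] at h
    have hnat : GV.card + BV.card = Fintype.card (Fin m → ZMod p) ^ (d + 1) := by
      rw [pow_succ']; exact h
    have : (GV.card : ℝ) + (BV.card : ℝ) = cV ^ (d + 1) := by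
      rw [hcVdef]; exact_mod_cast hnat
    linarith
  have hSc : (S.card : ℝ) = cW ^ (d + 1) - (BW.card : ℝ) := by
    have h := Finset.card_filter_add_card_filter_not
      (s := (univ : Finset ((Fin n → ZMod p) × (Fin d → Fin n → ZMod p))))
      (p := fun s => LinearIndependent (ZMod p) s.2)
    rw [← hS, ← hBW, Finset.card_univ, Fintype.card_prod] at h
    have hcd : Fintype.card (Fin d → Fin n → ZMod p) = (Fintype.card (Fin n → ZMod p)) ^ d := by
      simp
    rw [hcd] at h
    have hnat : S.card + BW.card = Fintype.card (Fin n → ZMod p) ^ (d + 1) := by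
      rw [pow_succ']; exact h
    have : (S.card : ℝ) + (BW.card : ℝ) = cW ^ (d + 1) := by
      rw [hcWdef]; exact_mod_cast hnat
    linarith
  -- the difference identity
  set rV : ℝ := ∑ v ∈ BV, ∑ A : {A : (Fin m → ZMod p) → (Fin n → ZMod p) //
    IsAffineEmbedding A}, g A v with hrV
  set rW : ℝ := ∑ s ∈ BW, F s with hrW
  have hid : (∑ A : {A : (Fin m → ZMod p) → (Fin n → ZMod p) // IsAffineEmbedding A},
      gowersAvg (fun x => f₃ (A.1 x)) d) / (N : ℝ) - gowersAvg f₃ d =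
      (((BW.card : ℝ) / cW ^ (d + 1)) - ((BV.card : ℝ) / cV ^ (d + 1))) * E +
        (rV / (cV ^ (d + 1) * (N : ℝ)) - rW / cW ^ (d + 1)) := by
    rw [hsumA, hgowf, hGVc, hSc]
    field_simp
    ring
  rw [hN] at hid
  rw [hid]
  -- bounds
  have habs1 : |(((BW.card : ℝ) / cW ^ (d + 1)) - ((BV.card : ℝ) / cV ^ (d + 1))) * E| ≤
      |((BW.card : ℝ) / cW ^ (d + 1)) - ((BV.card : ℝ) / cV ^ (d + 1))| := by
    rw [abs_mul]
    exact mul_le_of_le_one_right (abs_nonneg _) hEabs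
  have habs2 : |rV / (cV ^ (d + 1) * (N : ℝ))| ≤ (BV.card : ℝ) / cV ^ (d + 1) := by
    have hrVle : |rV| ≤ (BV.card : ℝ) * (N : ℝ) := by
      refine (Finset.abs_sum_le_sum_abs _ _).trans ?_
      calc ∑ v ∈ BV, |∑ A : {A : (Fin m → ZMod p) → (Fin n → ZMod p) //
            IsAffineEmbedding A}, g A v| ≤ ∑ v ∈ BV, (N : ℝ) := by
            refine Finset.sum_le_sum fun v _ => ?_
            refine (Finset.abs_sum_le_sum_abs _ _).trans ?_
            calc ∑ A : {A : (Fin m → ZMod p) → (Fin n → ZMod p) //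
                IsAffineEmbedding A}, |g A v| ≤ ∑ A : {A : (Fin m → ZMod p) →
                  (Fin n → ZMod p) // IsAffineEmbedding A}, 1 :=
                    Finset.sum_le_sum fun A _ => hgabs A v
              _ = (N : ℝ) := by
                    rw [Finset.sum_const, Finset.card_univ, nsmul_eq_mul, mul_one, hN]
        _ = (BV.card : ℝ) * (N : ℝ) := by rw [Finset.sum_const, nsmul_eq_mul]
    rw [abs_div, abs_of_nonneg (mul_pos hcVpos hN0).le]
    calc |rV| / (cV ^ (d + 1) * (N : ℝ)) ≤ ((BV.card : ℝ) * (N : ℝ)) /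
        (cV ^ (d + 1) * (N : ℝ)) := by gcongr
      _ = (BV.card : ℝ) / cV ^ (d + 1) := mul_div_mul_right _ _ hN0.ne'
  have habs3 : |rW / cW ^ (d + 1)| ≤ (BW.card : ℝ) / cW ^ (d + 1) := by
    rw [abs_div, abs_of_nonneg (le_of_lt hcWpos)]
    gcongr
    exact hsum_le BW
  -- counting bounds
  set geo : ℝ := ∑ j ∈ Finset.range d, (p : ℝ) ^ j with hgeo
  have hgeonat : geo = ((∑ j ∈ Finset.range d, p ^ j : ℕ) : ℝ) := by
    rw [hgeo]; push_cast; ring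
  have hgeononneg : 0 ≤ geo := by rw [hgeonat]; exact Nat.cast_nonneg _
  have hdepV : ∀ {k : ℕ} , m ≤ k → ∀ (BX : Finset ((Fin k → ZMod p) ×
      (Fin d → Fin k → ZMod p))), BX = univ.filter
        (fun v => ¬ LinearIndependent (ZMod p) v.2) →
      (BX.card : ℝ) / ((Fintype.card (Fin k → ZMod p) : ℝ)) ^ (d + 1) ≤ geo / (p : ℝ) ^ m := by
    intro k hk BX hBX
    have hck : (Fintype.card (Fin k → ZMod p)) = p ^ k := by simp [ZMod.card]
    have hdep := dep_count (K := ZMod p) (V := Fin k → ZMod p) (d := d)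
    have hprod : BX = (univ : Finset (Fin k → ZMod p)) ×ˢ
        (univ.filter fun y : Fin d → Fin k → ZMod p => ¬ LinearIndependent (ZMod p) y) := by
      rw [hBX]
      ext ⟨a, b⟩
      simp [Finset.mem_product]
    have hcard : BX.card = Fintype.card (Fin k → ZMod p) *
        (univ.filter fun y : Fin d → Fin k → ZMod p => ¬ LinearIndependent (ZMod p) y).card := by
      rw [hprod, Finset.card_product, Finset.card_univ]
    -- nat inequality : BX.card * p ^ m ≤ (∑ p^j) * (card)^(d+1)
    have hnat : BX.card * p ^ m ≤ (∑ j ∈ Finset.range d, p ^ j) *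
        (Fintype.card (Fin k → ZMod p)) ^ (d + 1) := by
      have hmk : p ^ m ≤ Fintype.card (Fin k → ZMod p) := by
        rw [hck]; exact Nat.pow_le_pow_right hp.pos hk
      calc BX.card * p ^ m ≤ BX.card * Fintype.card (Fin k → ZMod p) :=
            Nat.mul_le_mul_left _ hmk
        _ = Fintype.card (Fin k → ZMod p) *
            ((univ.filter fun y : Fin d → Fin k → ZMod p =>
              ¬ LinearIndependent (ZMod p) y).card * Fintype.card (Fin k → ZMod p)) := by
            rw [hcard]; ring
        _ ≤ Fintype.card (Fin k → ZMod p) * ((∑ j ∈ Finset.range d, Fintype.card (ZMod p) ^ j) *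
            Fintype.card (Fin k → ZMod p) ^ d) := Nat.mul_le_mul_left _ hdep
        _ = (∑ j ∈ Finset.range d, Fintype.card (ZMod p) ^ j) *
            Fintype.card (Fin k → ZMod p) ^ (d + 1) := by ring
        _ = (∑ j ∈ Finset.range d, p ^ j) * Fintype.card (Fin k → ZMod p) ^ (d + 1) := by
            rw [ZMod.card]
    have hckpos : (0 : ℝ) < ((Fintype.card (Fin k → ZMod p) : ℝ)) ^ (d + 1) := by
      have : 0 < Fintype.card (Fin k → ZMod p) := Fintype.card_pos
      positivity
    rw [div_le_div_iff₀ hckpos (by positivity)]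
    rw [hgeonat]
    calc (BX.card : ℝ) * (p : ℝ) ^ m =
        ((BX.card * p ^ m : ℕ) : ℝ) := by push_cast; ring
      _ ≤ (((∑ j ∈ Finset.range d, p ^ j) *
          (Fintype.card (Fin k → ZMod p)) ^ (d + 1) : ℕ) : ℝ) := by exact_mod_cast hnat
      _ = ((∑ j ∈ Finset.range d, p ^ j : ℕ) : ℝ) *
          ((Fintype.card (Fin k → ZMod p) : ℝ)) ^ (d + 1) := by push_cast; ring
  have ha : (BV.card : ℝ) / cV ^ (d + 1) ≤ geo / (p : ℝ) ^ m := by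
    rw [hcVdef]
    exact hdepV le_rfl BV hBV
  have hb : (BW.card : ℝ) / cW ^ (d + 1) ≤ geo / (p : ℝ) ^ m := by
    rw [hcWdef]
    exact hdepV hmn BW hBW
  have h2c : 2 * (geo / (p : ℝ) ^ m) ≤ (p : ℝ) ^ (d + 1) / (p : ℝ) ^ m := by
    rw [mul_div_assoc']
    refine div_le_div_of_nonneg_right ?_ (by positivity)
    rw [hgeonat]
    calc (2 : ℝ) * ((∑ j ∈ Finset.range d, p ^ j : ℕ) : ℝ) =
        ((2 * ∑ j ∈ Finset.range d, p ^ j : ℕ) : ℝ) := by push_cast; ring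
      _ ≤ (((p : ℕ) ^ (d + 1) : ℕ) : ℝ) := by exact_mod_cast two_geom_le hp2 d
      _ = (p : ℝ) ^ (d + 1) := by push_cast; ring
  -- final estimate
  set a : ℝ := (BV.card : ℝ) / cV ^ (d + 1) with hadef
  set b : ℝ := (BW.card : ℝ) / cW ^ (d + 1) with hbdef
  have hanonneg : 0 ≤ a := by rw [hadef]; exact div_nonneg (Nat.cast_nonneg _) hcVpos.le
  have hbnonneg : 0 ≤ b := by rw [hbdef]; exact div_nonneg (Nat.cast_nonneg _) hcWpos.le
  calc |(b - a) * E + (rV / (cV ^ (d + 1) * (N : ℝ)) - rW / cW ^ (d + 1))|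
      ≤ |(b - a) * E| + |rV / (cV ^ (d + 1) * (N : ℝ)) - rW / cW ^ (d + 1)| := abs_add_le _ _
    _ ≤ |(b - a) * E| + (|rV / (cV ^ (d + 1) * (N : ℝ))| + |rW / cW ^ (d + 1)|) := by
        exact add_le_add_right (abs_sub _ _) _
    _ ≤ |b - a| + (a + b) := by
        refine add_le_add habs1 (add_le_add habs2 habs3)
    _ ≤ 2 * (geo / (p : ℝ) ^ m) := by
        rcases le_total a b with h | h
        · rw [abs_of_nonneg (sub_nonneg.2 h)]
          linarith
        · rw [abs_of_nonpos (sub_nonpos.2 h)]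
          linarith
    _ ≤ (p : ℝ) ^ (d + 1) / (p : ℝ) ^ m := h2c
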